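/- Theorem 5.3 (deterministic interpolation for homogeneous divisible items): For every c ∈ [0,1] and all positive integers n and m, there exists a deterministic mechanism M for n agents and m homogeneous divisible items such that (i) M is e^{−c}-MNW, i.e., for every valuation profile and every agent i, u_i(M(profile)) ≥ e^{−c} · u_i(x*) where x* is an MNW allocation for the profile; and (ii) M has incentive ratio at most 2^{1−c}, i.e., for every profile, every agent i, and every misreport v_i', agent i's utility with respect to his true values under M applied to the misreported profile is at most 2^{1−c} times his utility under M applied to the true profile. -/

import Mathlib

/-- An allocation of `m` homogeneous divisible items among `n` agents: a matrix of
fractions in `[0,1]` whose column sums are at most `1`. -/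
def ItemAlloc {n m : ℕ} (x : Fin n → Fin m → ℝ) : Prop :=
  (∀ i t, x i t ∈ Set.Icc (0 : ℝ) 1) ∧ ∀ t, (∑ i, x i t) ≤ 1

/-- A complete allocation: every item is fully allocated. -/
def ItemAllocComplete {n m : ℕ} (x : Fin n → Fin m → ℝ) : Prop :=
  ItemAlloc x ∧ ∀ t, (∑ i, x i t) = 1

/-- Agent `i`'s utility under the values `v` and the allocation `x`. -/
def itemUtil {n m : ℕ} (v : Fin n → Fin m → ℝ) (x : Fin n → Fin m → ℝ) (i : Fin n) : ℝ :=
  ∑ t, v i t * x i t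

/-- A valid profile of item values: nonnegative with positive total for each agent. -/
def ValidItemProfile {n m : ℕ} (v : Fin n → Fin m → ℝ) : Prop :=
  ∀ i, (∀ t, 0 ≤ v i t) ∧ 0 < ∑ t, v i t

/-- An MNW allocation for homogeneous divisible items. -/
def IsItemMNW {n m : ℕ} (v : Fin n → Fin m → ℝ) (x : Fin n → Fin m → ℝ) : Prop :=
  ItemAlloc x ∧ ∀ z : Fin n → Fin m → ℝ, ItemAlloc z →
    (∏ i, itemUtil v z i) ≤ ∏ i, itemUtil v x i

/-- A complete MNW allocation for homogeneous divisible items (no free disposal). -/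
def IsItemCompleteMNW {n m : ℕ} (v : Fin n → Fin m → ℝ) (x : Fin n → Fin m → ℝ) : Prop :=
  ItemAllocComplete x ∧ ∀ z : Fin n → Fin m → ℝ, ItemAllocComplete z →
    (∏ i, itemUtil v z i) ≤ ∏ i, itemUtil v x i

namespace Det53
open Finset

variable {n m : ℕ}

lemma exp_bound {t : ℝ} (ht : -(1/2) ≤ t) : Real.exp (t - 2*t^2) ≤ 1 + t := by
  have h1t : (0:ℝ) < 1 + t := by linarith
  have hlog : 1 - 1/(1+t) ≤ Real.log (1+t) := by
    have := Real.log_le_sub_one_of_pos (x := 1/(1+t)) (by positivity)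
    have hli : Real.log (1/(1+t)) = - Real.log (1+t) := by
      rw [one_div, Real.log_inv]
    rw [hli] at this
    have : -Real.log (1+t) ≤ 1/(1+t) - 1 := this
    linarith
  have key : t - 2*t^2 ≤ 1 - 1/(1+t) := by
    have h : (t - 2*t^2) * (1+t) ≤ (1 - 1/(1+t)) * (1+t) := by
      have heq : (1 - 1/(1+t)) * (1+t) = t := by field_simp; ring
      rw [heq]
      nlinarith [mul_nonneg (sq_nonneg t) (by linarith : (0:ℝ) ≤ 1 + 2*t)]
    exact le_of_mul_le_mul_right h h1t
  calc Real.exp (t - 2*t^2) ≤ Real.exp (Real.log (1+t)) := by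
        apply Real.exp_le_exp.mpr; linarith
    _ = 1 + t := Real.exp_log h1t

lemma isCompact_allocSet : IsCompact {x : Fin n → Fin m → ℝ | ItemAlloc x} := by
  have hbox : IsCompact (Set.pi Set.univ fun _ : Fin n =>
      Set.pi Set.univ fun _ : Fin m => Set.Icc (0:ℝ) 1) :=
    isCompact_univ_pi fun _ => isCompact_univ_pi fun _ => isCompact_Icc
  apply hbox.of_isClosed_subset
  · have h1 : IsClosed {x : Fin n → Fin m → ℝ | ∀ i t, x i t ∈ Set.Icc (0:ℝ) 1} := by
      have : {x : Fin n → Fin m → ℝ | ∀ i t, x i t ∈ Set.Icc (0:ℝ) 1} =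
          ⋂ i, ⋂ t, {x : Fin n → Fin m → ℝ | x i t ∈ Set.Icc (0:ℝ) 1} := by
        ext x; simp
      rw [this]
      refine isClosed_iInter fun i => isClosed_iInter fun t => ?_
      exact IsClosed.preimage (by continuity) isClosed_Icc
    have h2 : IsClosed {x : Fin n → Fin m → ℝ | ∀ t, (∑ i, x i t) ≤ 1} := by
      have : {x : Fin n → Fin m → ℝ | ∀ t, (∑ i, x i t) ≤ 1} =
          ⋂ t, {x : Fin n → Fin m → ℝ | (∑ i, x i t) ≤ 1} := by ext x; simp
      rw [this]
      refine isClosed_iInter fun t => ?_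
      exact isClosed_le (by continuity) continuous_const
    have : {x : Fin n → Fin m → ℝ | ItemAlloc x} =
        {x | ∀ i t, x i t ∈ Set.Icc (0:ℝ) 1} ∩ {x | ∀ t, (∑ i, x i t) ≤ 1} := rfl
    rw [this]; exact h1.inter h2
  · intro x hx
    simp only [Set.mem_pi, Set.mem_univ, forall_true_left]
    intro i t
    exact hx.1 i t

lemma exists_maxOn (v : Fin n → Fin m → ℝ) (S : Finset (Fin n)) :
    ∃ x, ItemAlloc x ∧ ∀ z, ItemAlloc z →
      (∏ j ∈ S, itemUtil v z j) ≤ ∏ j ∈ S, itemUtil v x j := by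
  have hne : ({x : Fin n → Fin m → ℝ | ItemAlloc x}).Nonempty := by
    refine ⟨fun _ _ => 0, ⟨fun i t => ?_, fun t => by simp⟩⟩
    simp [Set.mem_Icc]
  have hcont : Continuous fun x : Fin n → Fin m → ℝ => ∏ j ∈ S, itemUtil v x j := by
    apply continuous_finset_prod
    intro j _
    unfold itemUtil
    apply continuous_finset_sum
    intro t _
    exact continuous_const.mul (by continuity)
  obtain ⟨x, hx, hmax⟩ := isCompact_allocSet.exists_isMaxOn hne hcont.continuousOn
  exact ⟨x, hx, fun z hz => hmax hz⟩

lemma util_nonneg (v x : Fin n → Fin m → ℝ) (hx : ItemAlloc x) (i : Fin n)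
    (hvi : ∀ t, 0 ≤ v i t) : 0 ≤ itemUtil v x i :=
  Finset.sum_nonneg fun t _ => mul_nonneg (hvi t) (hx.1 i t).1

lemma pf_ineq (v x : Fin n → Fin m → ℝ) (hx : ItemAlloc x)
    (hpos : ∀ j, 0 < itemUtil v x j)
    (hnn : ∀ z, ItemAlloc z → ∀ j, 0 ≤ itemUtil v z j)
    (hmax : ∀ z, ItemAlloc z → (∏ j, itemUtil v z j) ≤ ∏ j, itemUtil v x j)
    (z : Fin n → Fin m → ℝ) (hz : ItemAlloc z) :
    (∑ j, itemUtil v z j / itemUtil v x j) ≤ (n : ℝ) := by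
  by_contra hcon
  push_neg at hcon
  set r : Fin n → ℝ := fun j => itemUtil v z j / itemUtil v x j with hr
  set d : Fin n → ℝ := fun j => r j - 1 with hd
  have hdge : ∀ j, -1 ≤ d j := by
    intro j
    have : 0 ≤ r j := div_nonneg (hnn z hz j) (hpos j).le
    simp [hd]; linarith
  set s : ℝ := ∑ j, d j with hs
  have hspos : 0 < s := by
    have : (∑ j, d j) = (∑ j, r j) - n := by
      simp [hd, Finset.sum_sub_distrib]
    rw [hs, this]
    have : (∑ j, r j) = ∑ j, itemUtil v z j / itemUtil v x j := rfl
    linarith [hcon]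
  set Q : ℝ := ∑ j, (d j)^2 with hQ
  have hQnn : 0 ≤ Q := Finset.sum_nonneg fun j _ => sq_nonneg _
  set lam : ℝ := min (1/2) (s / (4*Q+1)) with hlam
  have hlampos : 0 < lam := lt_min (by norm_num) (by positivity)
  have hlamhalf : lam ≤ 1/2 := min_le_left _ _
  have hlamQ : 2 * lam * Q < s := by
    have h1 : lam ≤ s / (4*Q+1) := min_le_right _ _
    have h2 : 2 * lam * Q ≤ 2 * (s / (4*Q+1)) * Q := by
      apply mul_le_mul_of_nonneg_right _ hQnn
      linarith
    calc 2 * lam * Q ≤ 2 * (s / (4*Q+1)) * Q := h2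
      _ = s * (2*Q / (4*Q+1)) := by ring
      _ < s * 1 := by
          apply mul_lt_mul_of_pos_left _ hspos
          rw [div_lt_one (by positivity)]; linarith
      _ = s := by ring
  clear_value r d s Q lam
  set w : Fin n → Fin m → ℝ := fun i t => (1-lam) * x i t + lam * z i t with hw
  have hwalloc : ItemAlloc w := by
    constructor
    · intro i t
      have hx1 := hx.1 i t; have hz1 := hz.1 i t
      simp only [Set.mem_Icc] at hx1 hz1 ⊢
      constructor
      · have := mul_nonneg (by linarith : (0:ℝ) ≤ 1 - lam) hx1.1
        have := mul_nonneg hlampos.le hz1.1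
        simp only [hw]; linarith
      · simp only [hw]
        nlinarith [hx1.2, hz1.2]
    · intro t
      have : (∑ i, w i t) = (1-lam) * (∑ i, x i t) + lam * (∑ i, z i t) := by
        simp [hw, Finset.sum_add_distrib, Finset.mul_sum]
      rw [this]
      nlinarith [hx.2 t, hz.2 t]
  have hwutil : ∀ j, itemUtil v w j = itemUtil v x j * (1 + lam * d j) := by
    intro j
    have hru : itemUtil v z j = r j * itemUtil v x j := by
      rw [hr]
      exact (div_mul_cancel₀ _ (hpos j).ne').symm
    have : itemUtil v w j = (1-lam) * itemUtil v x j + lam * itemUtil v z j := by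
      simp only [itemUtil, hw]
      rw [Finset.mul_sum, Finset.mul_sum, ← Finset.sum_add_distrib]
      apply Finset.sum_congr rfl
      intro t _
      ring
    rw [this, hru]
    simp only [hd]
    ring
  have hup : ∏ j, itemUtil v w j = (∏ j, itemUtil v x j) * ∏ j, (1 + lam * d j) := by
    rw [← Finset.prod_mul_distrib]
    exact Finset.prod_congr rfl fun j _ => hwutil j
  have hPpos : 0 < ∏ j, itemUtil v x j := Finset.prod_pos fun j _ => hpos j
  have hprodle : (∏ j, (1 + lam * d j)) ≤ 1 := by
    have := hmax w hwalloc
    rw [hup] at this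
    nlinarith [this, hPpos]
  have hprodgt : 1 < ∏ j, (1 + lam * d j) := by
    have hterm : ∀ j : Fin n, Real.exp (lam * d j - 2*(lam * d j)^2) ≤ 1 + lam * d j := by
      intro j
      apply exp_bound
      have h1 : (0:ℝ) ≤ d j + 1 := by linarith [hdge j]
      have h2 : 0 ≤ lam * (d j + 1) := mul_nonneg hlampos.le h1
      have h3 : lam * (d j + 1) = lam * d j + lam := by ring
      rw [h3] at h2
      linarith
    calc (1:ℝ) = Real.exp 0 := by simp
      _ < Real.exp (∑ j, (lam * d j - 2*(lam * d j)^2)) := by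
          apply Real.exp_lt_exp.mpr
          have hsum : (∑ j, (lam * d j - 2*(lam * d j)^2)) = lam * s - 2 * lam^2 * Q := by
            rw [hs, hQ, Finset.mul_sum, Finset.mul_sum, ← Finset.sum_sub_distrib]
            apply Finset.sum_congr rfl
            intro j _
            ring
          rw [hsum]
          nlinarith [hlamQ, hlampos]
      _ = ∏ j, Real.exp (lam * d j - 2*(lam * d j)^2) := Real.exp_sum _ _
      _ ≤ ∏ j, (1 + lam * d j) := by
          apply Finset.prod_le_prod
          · intro j _; positivity
          · intro j _; exact hterm j
  linarith

/-- A chosen maximizer of the Nash product over a subset of agents. -/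
noncomputable def maxAlloc (v : Fin n → Fin m → ℝ) (S : Finset (Fin n)) :
    Fin n → Fin m → ℝ :=
  (exists_maxOn v S).choose

lemma maxAlloc_alloc (v : Fin n → Fin m → ℝ) (S : Finset (Fin n)) :
    ItemAlloc (maxAlloc v S) := (exists_maxOn v S).choose_spec.1

lemma maxAlloc_max (v : Fin n → Fin m → ℝ) (S : Finset (Fin n)) :
    ∀ z, ItemAlloc z → (∏ j ∈ S, itemUtil v z j) ≤ ∏ j ∈ S, itemUtil v (maxAlloc v S) j :=
  (exists_maxOn v S).choose_spec.2

lemma itemUtil_update_ne (v : Fin n → Fin m → ℝ) (i j : Fin n) (w : Fin m → ℝ)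
    (z : Fin n → Fin m → ℝ) (hji : j ≠ i) :
    itemUtil (Function.update v i w) z j = itemUtil v z j := by
  unfold itemUtil
  rw [Function.update_of_ne hji]

/-- Positivity of utilities at a Nash maximizer over all agents. -/
lemma maxal_pos (hn : 0 < n) (v : Fin n → Fin m → ℝ) (hv : ValidItemProfile v)
    (x : Fin n → Fin m → ℝ) (hx : ItemAlloc x)
    (hmax : ∀ z, ItemAlloc z → (∏ j, itemUtil v z j) ≤ ∏ j, itemUtil v x j) :
    ∀ j, 0 < itemUtil v x j := by
  have hne : (0:ℝ) < n := by exact_mod_cast hn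
  set eq : Fin n → Fin m → ℝ := fun _ _ => (n:ℝ)⁻¹ with heq
  have heqa : ItemAlloc eq := by
    constructor
    · intro i t
      constructor
      · positivity
      · rw [inv_le_one_iff₀]; right; exact_mod_cast hn
    · intro t
      simp only [heq]
      rw [Finset.sum_const, Finset.card_univ, Fintype.card_fin, nsmul_eq_mul,
        mul_inv_cancel₀ hne.ne']
  have heput : ∀ j, itemUtil v eq j = (∑ t, v j t) * (n:ℝ)⁻¹ := by
    intro j
    unfold itemUtil
    rw [← Finset.sum_mul]
  have heqpos : 0 < ∏ j, itemUtil v eq j := by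
    apply Finset.prod_pos
    intro j _
    rw [heput j]
    exact mul_pos (hv j).2 (by positivity)
  have hPpos : 0 < ∏ j, itemUtil v x j := lt_of_lt_of_le heqpos (hmax eq heqa)
  intro j
  rcases lt_or_eq_of_le (util_nonneg v x hx j (hv j).1) with h | h
  · exact h
  · exfalso
    have : (∏ j', itemUtil v x j') = 0 :=
      Finset.prod_eq_zero (Finset.mem_univ j) h.symm
    rw [this] at hPpos
    exact lt_irrefl _ hPpos

/-- All Nash maximizers give each agent the same utility. -/
lemma mnw_util_eq (hn : 0 < n) (v : Fin n → Fin m → ℝ) (hv : ValidItemProfile v)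
    (x y : Fin n → Fin m → ℝ) (hx : IsItemMNW v x) (hy : IsItemMNW v y) :
    ∀ i, itemUtil v x i = itemUtil v y i := by
  have hPeq : (∏ j, itemUtil v x j) = ∏ j, itemUtil v y j :=
    le_antisymm (hy.2 x hx.1) (hx.2 y hy.1)
  have hxp := maxal_pos hn v hv x hx.1 hx.2
  have hyp := maxal_pos hn v hv y hy.1 hy.2
  by_contra hcon
  push_neg at hcon
  obtain ⟨i, hi⟩ := hcon
  set z : Fin n → Fin m → ℝ := fun j t => (x j t + y j t)/2 with hz
  have hza : ItemAlloc z := by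
    constructor
    · intro j t
      have h1 := hx.1.1 j t; have h2 := hy.1.1 j t
      simp only [Set.mem_Icc] at h1 h2 ⊢
      constructor
      · simp only [hz]; linarith
      · simp only [hz]; linarith
    · intro t
      have : (∑ j, z j t) = ((∑ j, x j t) + (∑ j, y j t))/2 := by
        simp only [hz]
        rw [← Finset.sum_add_distrib, Finset.sum_div]
      rw [this]
      linarith [hx.1.2 t, hy.1.2 t]
  have hzu : ∀ j, itemUtil v z j = (itemUtil v x j + itemUtil v y j)/2 := by
    intro j
    simp only [itemUtil, hz, Finset.sum_div, ← Finset.sum_add_distrib]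
    apply Finset.sum_congr rfl
    intro t _
    ring
  have hsq : ∀ j, itemUtil v x j * itemUtil v y j ≤ (itemUtil v z j)^2 := by
    intro j
    rw [hzu j]
    nlinarith [sq_nonneg (itemUtil v x j - itemUtil v y j)]
  have hsqi : itemUtil v x i * itemUtil v y i < (itemUtil v z i)^2 := by
    rw [hzu i]
    have hne0 : itemUtil v x i - itemUtil v y i ≠ 0 := sub_ne_zero.mpr hi
    have h0 : 0 < (itemUtil v x i - itemUtil v y i)^2 := by
      rcases hne0.lt_or_gt with h | h
      · nlinarith
      · nlinarith
    nlinarith [h0]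
  have hlt : (∏ j, itemUtil v x j * itemUtil v y j) < ∏ j, (itemUtil v z j)^2 :=
    Finset.prod_lt_prod
      (fun j _ => mul_pos (hxp j) (hyp j))
      (fun j _ => hsq j)
      ⟨i, Finset.mem_univ i, hsqi⟩
  have hzP : (∏ j, itemUtil v z j) ≤ ∏ j, itemUtil v x j := hx.2 z hza
  have hzPnn : 0 ≤ ∏ j, itemUtil v z j :=
    Finset.prod_nonneg fun j _ => util_nonneg v z hza j (hv j).1
  have hexp : (∏ j, itemUtil v x j * itemUtil v y j) =
      (∏ j, itemUtil v x j) * ∏ j, itemUtil v y j := Finset.prod_mul_distrib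
  have hexp2 : (∏ j, (itemUtil v z j)^2) = (∏ j, itemUtil v z j)^2 := by
    rw [Finset.prod_pow]
  rw [hexp, hexp2, ← hPeq] at hlt
  nlinarith [hzP, hzPnn, hlt]

end Det53


namespace Det53
open Finset

variable {n m : ℕ}

noncomputable def Nfac (v : Fin n → Fin m → ℝ) (i : Fin n) : ℝ :=
  ∏ j ∈ univ.erase i, itemUtil v (maxAlloc v univ) j

noncomputable def Dfac (v : Fin n → Fin m → ℝ) (i : Fin n) : ℝ :=
  ∏ j ∈ univ.erase i,
    itemUtil (Function.update v i 0) (maxAlloc (Function.update v i 0) (univ.erase i)) j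

noncomputable def mech (c : ℝ) (v : Fin n → Fin m → ℝ) : Fin n → Fin m → ℝ :=
  fun i t => (Nfac v i / Dfac v i) ^ c * maxAlloc v univ i t

lemma Dfac_update (v : Fin n → Fin m → ℝ) (i : Fin n) (vi' : Fin m → ℝ) :
    Dfac (Function.update v i vi') i = Dfac v i := by
  unfold Dfac
  rw [Function.update_idem]

lemma Dfac_eq (v : Fin n → Fin m → ℝ) (i : Fin n) :
    Dfac v i = ∏ j ∈ univ.erase i,
      itemUtil v (maxAlloc (Function.update v i 0) (univ.erase i)) j :=
  Finset.prod_congr rfl fun j hj =>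
    itemUtil_update_ne v i j 0 _ (Finset.ne_of_mem_erase hj)

lemma Dfac_ge (v : Fin n → Fin m → ℝ) (i : Fin n) (z : Fin n → Fin m → ℝ)
    (hz : ItemAlloc z) : (∏ j ∈ univ.erase i, itemUtil v z j) ≤ Dfac v i := by
  have h := maxAlloc_max (Function.update v i 0) (univ.erase i) z hz
  have e1 : (∏ j ∈ univ.erase i, itemUtil (Function.update v i 0) z j)
      = ∏ j ∈ univ.erase i, itemUtil v z j :=
    Finset.prod_congr rfl fun j hj =>
      itemUtil_update_ne v i j 0 z (Finset.ne_of_mem_erase hj)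
  rw [e1] at h
  exact h

lemma mech_util (c : ℝ) (v w : Fin n → Fin m → ℝ) (i : Fin n) :
    itemUtil v (mech c w) i = (Nfac w i / Dfac w i) ^ c * itemUtil v (maxAlloc w univ) i := by
  unfold itemUtil mech
  rw [Finset.mul_sum]
  apply Finset.sum_congr rfl
  intro t _
  ring

section Valid

variable {v : Fin n → Fin m → ℝ}

lemma Npos (hn : 0 < n) (hv : ValidItemProfile v) (i : Fin n) : 0 < Nfac v i :=
  Finset.prod_pos fun j _ =>
    maxal_pos hn v hv _ (maxAlloc_alloc v univ) (maxAlloc_max v univ) j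

lemma NleD (v : Fin n → Fin m → ℝ) (i : Fin n) : Nfac v i ≤ Dfac v i :=
  Dfac_ge v i _ (maxAlloc_alloc v univ)

lemma Dpos (hn : 0 < n) (hv : ValidItemProfile v) (i : Fin n) : 0 < Dfac v i :=
  lt_of_lt_of_le (Npos hn hv i) (NleD v i)

lemma f_ge (hn : 0 < n) (hv : ValidItemProfile v) (i : Fin n) : Real.exp (-1) ≤ Nfac v i / Dfac v i := by
  set X := maxAlloc v univ with hX
  have hXa : ItemAlloc X := maxAlloc_alloc v univ
  have hXmax := maxAlloc_max v univ
  have upos : ∀ j, 0 < itemUtil v X j := maxal_pos hn v hv X hXa hXmax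
  set Y := maxAlloc (Function.update v i 0) (univ.erase i) with hY
  have hYa : ItemAlloc Y := maxAlloc_alloc _ _
  have hnn : ∀ z, ItemAlloc z → ∀ j, 0 ≤ itemUtil v z j :=
    fun z hz j => util_nonneg v z hz j (hv j).1
  have hpf := pf_ineq v X hXa upos hnn hXmax Y hYa
  set r : Fin n → ℝ := fun j => itemUtil v Y j / itemUtil v X j with hr
  have hr0 : ∀ j, 0 ≤ r j := fun j => div_nonneg (hnn Y hYa j) (upos j).le
  have hsub : (∑ j ∈ univ.erase i, r j) ≤ (n : ℝ) := by
    refine le_trans (Finset.sum_le_sum_of_subset_of_nonneg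
      (Finset.subset_univ _) (fun j _ _ => hr0 j)) hpf
  have hcard : ((univ.erase i).card : ℝ) = (n : ℝ) - 1 := by
    rw [Finset.card_erase_of_mem (Finset.mem_univ i), Finset.card_univ, Fintype.card_fin,
      Nat.cast_sub hn]
    norm_num
  have hprod : (∏ j ∈ univ.erase i, r j) ≤ Real.exp 1 := by
    calc (∏ j ∈ univ.erase i, r j) ≤ ∏ j ∈ univ.erase i, Real.exp (r j - 1) := by
          apply Finset.prod_le_prod (fun j _ => hr0 j)
          intro j _
          have := Real.add_one_le_exp (r j - 1)
          linarith
      _ = Real.exp (∑ j ∈ univ.erase i, (r j - 1)) := (Real.exp_sum _ _).symm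
      _ ≤ Real.exp 1 := by
          apply Real.exp_le_exp.mpr
          rw [Finset.sum_sub_distrib, Finset.sum_const, nsmul_eq_mul, mul_one, hcard]
          linarith
  have hDle : Dfac v i ≤ Real.exp 1 * Nfac v i := by
    have e1 : Dfac v i = ∏ j ∈ univ.erase i, itemUtil v Y j := Dfac_eq v i
    have e2 : ∀ j, itemUtil v Y j = r j * itemUtil v X j := by
      intro j
      rw [hr]
      exact (div_mul_cancel₀ _ (upos j).ne').symm
    calc Dfac v i = ∏ j ∈ univ.erase i, (r j * itemUtil v X j) := by
          rw [e1]; exact Finset.prod_congr rfl fun j _ => e2 j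
      _ = (∏ j ∈ univ.erase i, r j) * Nfac v i := by
          rw [Finset.prod_mul_distrib]; rfl
      _ ≤ Real.exp 1 * Nfac v i :=
          mul_le_mul_of_nonneg_right hprod (Npos hn hv i).le
  rw [le_div_iff₀ (Dpos hn hv i)]
  calc Real.exp (-1) * Dfac v i ≤ Real.exp (-1) * (Real.exp 1 * Nfac v i) :=
        mul_le_mul_of_nonneg_left hDle (Real.exp_pos _).le
    _ = Nfac v i := by
        rw [← mul_assoc, ← Real.exp_add]
        norm_num

end Valid

end Det53

/-- Theorem 5.3 (deterministic interpolation for homogeneous divisible items): for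
every `c ∈ [0,1]` and all `n, m`, there is a deterministic mechanism `M` that always
outputs an allocation, is `e^{−c}`-MNW on every valid profile, and has incentive
ratio at most `2^{1−c}`: for every valid profile, agent `i`, and valid misreport
`vi'`, agent `i`'s true utility under `M` applied to the misreported profile is at
most `2^{1−c}` times his utility under `M` applied to the true profile. -/
theorem deterministic_interpolation_items (c : ℝ) (hc : c ∈ Set.Icc (0 : ℝ) 1)
    (n m : ℕ) (hn : 0 < n) (hm : 0 < m) :
    ∃ M : (Fin n → Fin m → ℝ) → (Fin n → Fin m → ℝ),
      (∀ v, ValidItemProfile v → ItemAlloc (M v)) ∧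
      (∀ v, ValidItemProfile v → ∀ xstar, IsItemMNW v xstar →
        ∀ i, Real.exp (-c) * itemUtil v xstar i ≤ itemUtil v (M v) i) ∧
      (∀ v, ValidItemProfile v → ∀ (i : Fin n) (vi' : Fin m → ℝ),
        ((∀ t, 0 ≤ vi' t) ∧ 0 < ∑ t, vi' t) →
        itemUtil v (M (Function.update v i vi')) i ≤
          (2 : ℝ) ^ (1 - c) * itemUtil v (M v) i) := by
  obtain ⟨hc0, hc1⟩ := hc
  have h1c : (0:ℝ) ≤ 1 - c := by linarith
  refine ⟨Det53.mech c, ?_, ?_, ?_⟩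
  · -- (i) always an allocation
    intro v hv
    have hXa := Det53.maxAlloc_alloc v Finset.univ
    have hg0 : ∀ i, 0 ≤ (Det53.Nfac v i / Det53.Dfac v i) ^ c := fun i =>
      Real.rpow_nonneg (div_nonneg (Det53.Npos hn hv i).le (Det53.Dpos hn hv i).le) c
    have hg1 : ∀ i, (Det53.Nfac v i / Det53.Dfac v i) ^ c ≤ 1 := fun i =>
      Real.rpow_le_one (div_nonneg (Det53.Npos hn hv i).le (Det53.Dpos hn hv i).le)
        ((div_le_one (Det53.Dpos hn hv i)).mpr (Det53.NleD v i)) hc0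
    constructor
    · intro i t
      have hx := hXa.1 i t
      simp only [Set.mem_Icc] at hx ⊢
      refine ⟨mul_nonneg (hg0 i) hx.1, ?_⟩
      exact mul_le_one₀ (hg1 i) hx.1 hx.2
    · intro t
      calc (∑ i, Det53.mech c v i t) ≤ ∑ i, Det53.maxAlloc v Finset.univ i t := by
            apply Finset.sum_le_sum
            intro i _
            have hx := hXa.1 i t
            simp only [Set.mem_Icc] at hx
            calc Det53.mech c v i t
                ≤ 1 * Det53.maxAlloc v Finset.univ i t :=
                  mul_le_mul_of_nonneg_right (hg1 i) hx.1
              _ = _ := one_mul _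
        _ ≤ 1 := hXa.2 t
  · -- (ii) e^{-c}-MNW
    intro v hv xstar hxs i
    have hXa := Det53.maxAlloc_alloc v Finset.univ
    have hXmax := Det53.maxAlloc_max v Finset.univ
    have hXmnw : IsItemMNW v (Det53.maxAlloc v Finset.univ) := ⟨hXa, hXmax⟩
    have hue := Det53.mnw_util_eq hn v hv xstar (Det53.maxAlloc v Finset.univ) hxs hXmnw i
    rw [Det53.mech_util, hue]
    have hupos : 0 < itemUtil v (Det53.maxAlloc v Finset.univ) i :=
      Det53.maxal_pos hn v hv _ hXa hXmax i
    have hfc : Real.exp (-c) ≤ (Det53.Nfac v i / Det53.Dfac v i) ^ c := by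
      have h1 : Real.exp (-1) ^ c = Real.exp (-c) := by
        rw [Real.rpow_def_of_pos (Real.exp_pos _), Real.log_exp]
        ring_nf
      rw [← h1]
      exact Real.rpow_le_rpow (Real.exp_pos _).le (Det53.f_ge hn hv i) hc0
    exact mul_le_mul_of_nonneg_right hfc hupos.le
  · -- (iii) incentive ratio
    intro v hv i vi' hvi'
    set v' := Function.update v i vi' with hv'def
    have hv' : ValidItemProfile v' := by
      intro j
      by_cases hj : j = i
      · subst hj
        simp only [hv'def, Function.update_self]
        exact hvi'
      · simp only [hv'def, Function.update_of_ne hj]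
        exact hv j
    set X := Det53.maxAlloc v Finset.univ with hXdef
    set X' := Det53.maxAlloc v' Finset.univ with hX'def
    have hXa : ItemAlloc X := Det53.maxAlloc_alloc v Finset.univ
    have hX'a : ItemAlloc X' := Det53.maxAlloc_alloc v' Finset.univ
    have hXmax := Det53.maxAlloc_max v Finset.univ
    have hX'max := Det53.maxAlloc_max v' Finset.univ
    have upos : ∀ j, 0 < itemUtil v X j := Det53.maxal_pos hn v hv X hXa hXmax
    have upos' : ∀ j, 0 < itemUtil v' X' j := Det53.maxal_pos hn v' hv' X' hX'a hX'max
    have hnn1 : ∀ z, ItemAlloc z → ∀ j, 0 ≤ itemUtil v z j :=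
      fun z hz j => Det53.util_nonneg v z hz j (hv j).1
    have hnn2 : ∀ z, ItemAlloc z → ∀ j, 0 ≤ itemUtil v' z j :=
      fun z hz j => Det53.util_nonneg v' z hz j (hv' j).1
    -- notation
    set A : ℝ := itemUtil v X' i with hAdef
    set ustar : ℝ := itemUtil v X i with hustardef
    set N : ℝ := Det53.Nfac v i with hNdef
    set N' : ℝ := Det53.Nfac v' i with hN'def
    set D : ℝ := Det53.Dfac v i with hDdef
    have hDpos : 0 < D := Det53.Dpos hn hv i
    have hNpos : 0 < N := Det53.Npos hn hv i
    have hN'pos : 0 < N' := Det53.Npos hn hv' i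
    have hA0 : 0 ≤ A := Det53.util_nonneg v X' hX'a i (hv i).1
    have hust : 0 < ustar := upos i
    -- transport utilities between profiles for j ≠ i
    have hupdne : ∀ (z : Fin n → Fin m → ℝ) (j : Fin n), j ≠ i →
        itemUtil v' z j = itemUtil v z j :=
      fun z j hji => Det53.itemUtil_update_ne v i j vi' z hji
    have hN'eq : N' = ∏ j ∈ Finset.univ.erase i, itemUtil v X' j := by
      rw [hN'def]
      unfold Det53.Nfac
      exact Finset.prod_congr rfl fun j hj => hupdne X' j (Finset.ne_of_mem_erase hj)
    -- (a) N' * A ≤ N * ustar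
    have hNA : N' * A ≤ N * ustar := by
      have h1 : (∏ j, itemUtil v X' j) ≤ ∏ j, itemUtil v X j := hXmax X' hX'a
      have e1 : (∏ j ∈ Finset.univ.erase i, itemUtil v X' j) * A = ∏ j, itemUtil v X' j :=
        Finset.prod_erase_mul _ _ (Finset.mem_univ i)
      have e2 : N * ustar = ∏ j, itemUtil v X j :=
        Finset.prod_erase_mul _ _ (Finset.mem_univ i)
      rw [hN'eq, e1, e2]
      exact h1
    -- (b) A ≤ 2 * ustar
    have hA2 : A ≤ 2 * ustar := by
      have hpf1 := Det53.pf_ineq v X hXa upos hnn1 hXmax X' hX'a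
      have hpf2 := Det53.pf_ineq v' X' hX'a upos' hnn2 hX'max X hXa
      have hsplit1 : (∑ j ∈ Finset.univ.erase i, itemUtil v X' j / itemUtil v X j)
          + A / ustar = ∑ j, itemUtil v X' j / itemUtil v X j :=
        Finset.sum_erase_add _ _ (Finset.mem_univ i)
      have hsplit2 : (∑ j ∈ Finset.univ.erase i, itemUtil v' X j / itemUtil v' X' j)
          + itemUtil v' X i / itemUtil v' X' i = ∑ j, itemUtil v' X j / itemUtil v' X' j :=
        Finset.sum_erase_add _ _ (Finset.mem_univ i)
      have hterm2 : 0 ≤ itemUtil v' X i / itemUtil v' X' i :=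
        div_nonneg (hnn2 X hXa i) (upos' i).le
      have hS2 : (∑ j ∈ Finset.univ.erase i, itemUtil v X j / itemUtil v X' j) ≤ (n:ℝ) := by
        have : (∑ j ∈ Finset.univ.erase i, itemUtil v' X j / itemUtil v' X' j)
            = ∑ j ∈ Finset.univ.erase i, itemUtil v X j / itemUtil v X' j := by
          apply Finset.sum_congr rfl
          intro j hj
          rw [hupdne X j (Finset.ne_of_mem_erase hj), hupdne X' j (Finset.ne_of_mem_erase hj)]
        rw [← this]
        linarith [hsplit2, hpf2, hterm2]
      have hX'pos : ∀ j, j ≠ i → 0 < itemUtil v X' j := by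
        intro j hj
        rw [← hupdne X' j hj]
        exact upos' j
      have hterm : ∀ j ∈ Finset.univ.erase i,
          2 - itemUtil v X j / itemUtil v X' j ≤ itemUtil v X' j / itemUtil v X j := by
        intro j hj
        have ha : 0 < itemUtil v X' j := hX'pos j (Finset.ne_of_mem_erase hj)
        have hb : 0 < itemUtil v X j := upos j
        have key : 2 ≤ itemUtil v X' j / itemUtil v X j + itemUtil v X j / itemUtil v X' j := by
          rw [div_add_div _ _ hb.ne' ha.ne', le_div_iff₀ (mul_pos hb ha)]
          nlinarith [sq_nonneg (itemUtil v X' j - itemUtil v X j)]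
        linarith [key]
      have hcard : ((Finset.univ.erase i).card : ℝ) = (n : ℝ) - 1 := by
        rw [Finset.card_erase_of_mem (Finset.mem_univ i), Finset.card_univ, Fintype.card_fin,
          Nat.cast_sub hn]
        norm_num
      have hsum2 : (2:ℝ) * ((n:ℝ) - 1)
          - (∑ j ∈ Finset.univ.erase i, itemUtil v X j / itemUtil v X' j)
          ≤ ∑ j ∈ Finset.univ.erase i, itemUtil v X' j / itemUtil v X j := by
        have := Finset.sum_le_sum hterm
        rw [Finset.sum_sub_distrib, Finset.sum_const, nsmul_eq_mul, hcard] at this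
        linarith [this]
      have hAu : A / ustar ≤ 2 := by
        have h1 : A / ustar ≤ (n:ℝ) - ∑ j ∈ Finset.univ.erase i, itemUtil v X' j / itemUtil v X j := by
          linarith [hsplit1, hpf1]
        linarith [h1, hsum2, hS2]
      rw [div_le_iff₀ hust] at hAu
      linarith [hAu]
    -- final computation
    have hDD : Det53.Dfac v' i = D := by
      rw [hv'def, Det53.Dfac_update]
    rw [Det53.mech_util, Det53.mech_util, hDD, ← hX'def, ← hXdef, ← hN'def, ← hNdef,
      ← hDdef, ← hAdef, ← hustardef]
    have hDc : 0 < D ^ c := Real.rpow_pos_of_pos hDpos c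
    rcases eq_or_lt_of_le hA0 with hA | hApos
    · rw [← hA, mul_zero]
      positivity
    · have main : N' ^ c * A ≤ 2 ^ (1-c) * N ^ c * ustar := by
        have e3 : A ^ c * A ^ (1-c) = A := by
          rw [← Real.rpow_add hApos]
          norm_num
        have e4 : ustar ^ c * ustar ^ (1-c) = ustar := by
          rw [← Real.rpow_add hust]
          norm_num
        calc N' ^ c * A = (N' * A) ^ c * A ^ (1-c) := by
              rw [Real.mul_rpow hN'pos.le hA0, mul_assoc, e3]
          _ ≤ (N * ustar) ^ c * (2 * ustar) ^ (1-c) := by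
              apply mul_le_mul
              · exact Real.rpow_le_rpow (mul_nonneg hN'pos.le hA0) hNA hc0
              · exact Real.rpow_le_rpow hA0 hA2 h1c
              · exact Real.rpow_nonneg hA0 _
              · exact Real.rpow_nonneg (mul_nonneg hNpos.le hust.le) _
          _ = 2 ^ (1-c) * N ^ c * ustar := by
              rw [Real.mul_rpow hNpos.le hust.le,
                Real.mul_rpow (by norm_num : (0:ℝ) ≤ 2) hust.le]
              linear_combination (2:ℝ) ^ (1-c) * N ^ c * e4
      calc (N' / D) ^ c * A = (N' ^ c * A) / D ^ c := by
            rw [Real.div_rpow hN'pos.le hDpos.le]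
            ring
        _ ≤ (2 ^ (1-c) * N ^ c * ustar) / D ^ c := by
            exact div_le_div_of_nonneg_right main hDc.le
        _ = 2 ^ (1-c) * ((N / D) ^ c * ustar) := by
            rw [Real.div_rpow hNpos.le hDpos.le]
            ring
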